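/- Let D be an open subset of a finite dimensional real normed space (V,‖·‖) and let f : D → V be nonexpansive with Fix(f) = {x ∈ D : f(x) = x} compact and nonempty. If G is a bounded open set with closure(G) ⊆ D and Fix(f) ⊆ G, then for every y ∈ V with y ≠ 0 there exist w in the boundary of G and λ > 0 such that w − f(w) = λ y. -/

import Mathlib

open Metric Set

/-- If `g` is a `c`-contraction on a closed ball and `z` is close enough to `w - g w`,
then `x - g x = z` has a solution in the ball. -/
lemma banach_ball {V : Type*} [NormedAddCommGroup V] [NormedSpace ℝ V] [CompleteSpace V]
    (c : NNReal) (hc : (c : ℝ) < 1) (w : V) (r : ℝ) (hr : 0 < r) (g : V → V)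
    (hg : ∀ x ∈ closedBall w r, ∀ y ∈ closedBall w r, ‖g x - g y‖ ≤ c * ‖x - y‖)
    (z : V) (hz : ‖z - (w - g w)‖ ≤ (1 - c) * r) :
    ∃ x ∈ closedBall w r, x - g x = z := by
  set h : V → V := fun x => g x + z with hh
  have hmaps : MapsTo h (closedBall w r) (closedBall w r) := by
    intro x hx
    simp only [mem_closedBall, dist_eq_norm, hh]
    have : g x + z - w = (g x - g w) + (z - (w - g w)) := by abel
    rw [this]
    calc ‖(g x - g w) + (z - (w - g w))‖ ≤ ‖g x - g w‖ + ‖z - (w - g w)‖ := norm_add_le _ _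
      _ ≤ c * ‖x - w‖ + (1 - c) * r := by
          gcongr
          exact hg x hx w (mem_closedBall_self hr.le)
      _ ≤ c * r + (1 - c) * r := by
          have hxw : ‖x - w‖ ≤ r := by rw [← dist_eq_norm]; exact hx
          have : (0:ℝ) ≤ c := c.coe_nonneg
          nlinarith
      _ = r := by ring
  have hcontr : ContractingWith c (hmaps.restrict h _ _) := by
    constructor
    · exact_mod_cast hc
    · apply LipschitzWith.of_dist_le_mul
      rintro ⟨x, hx⟩ ⟨y, hy⟩
      simp only [MapsTo.restrict, Subtype.dist_eq, dist_eq_norm, Subtype.map]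
      have : h x - h y = g x - g y := by simp [hh]
      rw [this]
      exact hg x hx y hy
  obtain ⟨x, hxmem, hfix, -⟩ := hcontr.exists_fixedPoint'
    (isClosed_closedBall.isComplete) hmaps (mem_closedBall_self hr.le) (edist_ne_top _ _)
  refine ⟨x, hxmem, ?_⟩
  have hx' : g x + z = x := hfix
  exact sub_eq_of_eq_add' hx'.symm

/-- Key step: for each `l > 1`, there is a boundary point `w` and `t ∈ [0, 4R/‖y‖]` with
`l • w - f w = (l-1) • x₀ + t • y`. -/
lemma key_step {V : Type*} [NormedAddCommGroup V] [NormedSpace ℝ V] [FiniteDimensional ℝ V]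
    (D : Set V) (f : V → V)
    (hf : ∀ x ∈ D, ∀ y ∈ D, ‖f x - f y‖ ≤ ‖x - y‖)
    (G : Set V) (hGopen : IsOpen G) (hGD : closure G ⊆ D)
    (hfK : ContinuousOn f (closure G)) (hK : IsCompact (closure G))
    (x₀ : V) (hx₀G : x₀ ∈ G) (hx₀f : f x₀ = x₀) (y : V) (hy0 : 0 < ‖y‖)
    (R : ℝ) (hRb : ∀ x ∈ closure G, ‖x‖ ≤ R ∧ ‖f x‖ ≤ R)
    (l : ℝ) (hl1 : 1 < l) (hl2 : l ≤ 2) :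
    ∃ w ∈ frontier G, ∃ t : ℝ, 0 ≤ t ∧ t ≤ 4 * R / ‖y‖ ∧
      l • w - f w = (l - 1) • x₀ + t • y := by
  have hl0 : 0 < l := by linarith
  set K := closure G with hKdef
  set A : Set V := (fun x => l • x - f x) '' K with hA
  have hAcpt : IsCompact A := hK.image_of_continuousOn
    ((continuousOn_const.smul continuousOn_id).sub hfK)
  set S : Set ℝ := {t : ℝ | 0 ≤ t ∧ (l - 1) • x₀ + t • y ∈ A} with hS
  have hx₀K : x₀ ∈ K := subset_closure hx₀G
  have hS0 : (0 : ℝ) ∈ S := by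
    refine ⟨le_refl 0, ⟨x₀, hx₀K, ?_⟩⟩
    show l • x₀ - f x₀ = (l - 1) • x₀ + 0 • y
    rw [hx₀f]
    module
  have hSb : ∀ t ∈ S, t ≤ 4 * R / ‖y‖ := by
    rintro t ⟨ht0, x, hxK, hxeq⟩
    simp only at hxeq
    have h1 : t • y = (l • x - f x) - (l - 1) • x₀ := by rw [hxeq]; abel
    have h2 : ‖t • y‖ ≤ 4 * R := by
      rw [h1]
      have hx := hRb x hxK
      have hx0 := hRb x₀ hx₀K
      calc ‖(l • x - f x) - (l - 1) • x₀‖ ≤ ‖l • x - f x‖ + ‖(l - 1) • x₀‖ :=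
            norm_sub_le _ _
        _ ≤ ‖l • x‖ + ‖f x‖ + ‖(l - 1) • x₀‖ := by
            have := norm_sub_le (l • x) (f x); linarith
        _ = l * ‖x‖ + ‖f x‖ + (l - 1) * ‖x₀‖ := by
              rw [norm_smul, norm_smul, Real.norm_eq_abs, Real.norm_eq_abs,
                abs_of_pos hl0, abs_of_pos (by linarith : (0:ℝ) < l - 1)]
        _ ≤ 4 * R := by nlinarith [hx.1, hx.2, hx0.1, norm_nonneg x]
    rw [norm_smul, Real.norm_eq_abs, abs_of_nonneg ht0] at h2
    rw [le_div_iff₀ hy0]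
    exact h2
  have hSbdd : BddAbove S := ⟨4 * R / ‖y‖, fun t ht => hSb t ht⟩
  have hSclosed : IsClosed S := by
    have : S = Set.Ici 0 ∩ ((fun t : ℝ => (l - 1) • x₀ + t • y) ⁻¹' A) := by
      ext t; simp [hS, Set.mem_Ici]
    rw [this]
    exact isClosed_Ici.inter (hAcpt.isClosed.preimage (by fun_prop))
  have htS : sSup S ∈ S := hSclosed.csSup_mem ⟨0, hS0⟩ hSbdd
  obtain ⟨hts0, x, hxK, hxeq⟩ := htS
  simp only at hxeq
  have hxG : x ∉ G := by
    intro hxG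
    obtain ⟨ε, hε, hball⟩ := Metric.isOpen_iff.1 hGopen x hxG
    set r := ε / 2 with hr
    have hrpos : 0 < r := by positivity
    have hrε : r < ε := by rw [hr]; linarith
    have hcb : Metric.closedBall x r ⊆ G :=
      (Metric.closedBall_subset_ball hrε).trans hball
    set c : NNReal := ⟨l⁻¹, by positivity⟩ with hc
    have hcR : (c : ℝ) = l⁻¹ := rfl
    have hclt : (c : ℝ) < 1 := by rw [hcR]; exact inv_lt_one_of_one_lt₀ hl1
    set g : V → V := fun v => l⁻¹ • f v with hg
    have hgc : ∀ a ∈ Metric.closedBall x r, ∀ b ∈ Metric.closedBall x r,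
        ‖g a - g b‖ ≤ c * ‖a - b‖ := by
      intro a ha b hb
      have : g a - g b = l⁻¹ • (f a - f b) := by rw [hg, smul_sub]
      rw [this, norm_smul, Real.norm_eq_abs, abs_of_pos (by positivity : (0:ℝ) < l⁻¹), hcR]
      gcongr
      exact hf a (hGD (subset_closure (hcb ha))) b (hGD (subset_closure (hcb hb)))
    set δ : ℝ := (1 - l⁻¹) * r / ‖y‖ with hδ
    have hil : l⁻¹ < 1 := inv_lt_one_of_one_lt₀ hl1
    have hδpos : 0 < δ := by
      apply div_pos _ hy0
      nlinarith
    set z : V := l⁻¹ • ((l - 1) • x₀ + (sSup S + δ) • y) with hz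
    have hxgx : x - g x = l⁻¹ • ((l - 1) • x₀ + sSup S • y) := by
      rw [← hxeq, hg, smul_sub, smul_smul, inv_mul_cancel₀ (ne_of_gt hl0), one_smul]
    have hznear : ‖z - (x - g x)‖ ≤ (1 - (c : ℝ)) * r := by
      rw [hxgx, hz]
      have : l⁻¹ • ((l - 1) • x₀ + (sSup S + δ) • y) -
          l⁻¹ • ((l - 1) • x₀ + sSup S • y) = (l⁻¹ * δ) • y := by module
      rw [this, norm_smul, Real.norm_eq_abs,
        abs_of_pos (by positivity : (0:ℝ) < l⁻¹ * δ), hcR, hδ]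
      have hyne : ‖y‖ ≠ 0 := ne_of_gt hy0
      have heq2 : l⁻¹ * ((1 - l⁻¹) * r / ‖y‖) * ‖y‖ = l⁻¹ * ((1 - l⁻¹) * r) := by
        field_simp
      rw [heq2]
      have hinv : 0 < l⁻¹ := by positivity
      nlinarith [mul_nonneg (mul_nonneg (sub_nonneg.mpr hil.le) (sub_nonneg.mpr hil.le)) hrpos.le]
    obtain ⟨v, hvmem, hveq⟩ := banach_ball c hclt x r hrpos g hgc z hznear
    have hveq2 : l • v - f v = (l - 1) • x₀ + (sSup S + δ) • y := by
      have h3 := congrArg (fun u => l • u) hveq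
      simp only [hg, hz, smul_sub, smul_smul, mul_inv_cancel₀ (ne_of_gt hl0), one_smul] at h3
      exact h3
    have hvK : v ∈ K := subset_closure (hcb hvmem)
    have hmem : sSup S + δ ∈ S := ⟨by linarith, v, hvK, hveq2⟩
    have hle := le_csSup hSbdd hmem
    linarith
  refine ⟨x, ?_, sSup S, hts0, hSb _ ⟨hts0, x, hxK, hxeq⟩, hxeq⟩
  rw [hGopen.frontier_eq]
  exact ⟨hxK, hxG⟩

/-- If `f : D → V` is nonexpansive with compact nonempty fixed point set, and `G` is a
bounded open set with `closure G ⊆ D` and `Fix(f) ⊆ G`, then every direction `y ≠ 0` is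
realized as `w - f(w) = λ y` for some `w ∈ ∂G` and `λ > 0`. -/
theorem stmt5 {V : Type*} [NormedAddCommGroup V] [NormedSpace ℝ V] [FiniteDimensional ℝ V]
    (D : Set V) (hD : IsOpen D) (f : V → V)
    (hf : ∀ x ∈ D, ∀ y ∈ D, ‖f x - f y‖ ≤ ‖x - y‖)
    (hcpt : IsCompact {x ∈ D | f x = x}) (hne : {x ∈ D | f x = x}.Nonempty)
    (G : Set V) (hGopen : IsOpen G) (hGbdd : Bornology.IsBounded G)
    (hGD : closure G ⊆ D) (hFixG : {x ∈ D | f x = x} ⊆ G) :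
    ∀ y : V, y ≠ 0 → ∃ w ∈ frontier G, ∃ l : ℝ, 0 < l ∧ w - f w = l • y := by
  intro y hy
  have hy0 : 0 < ‖y‖ := norm_pos_iff.mpr hy
  obtain ⟨x₀, hx₀D, hx₀f⟩ := hne
  have hx₀G : x₀ ∈ G := hFixG ⟨hx₀D, hx₀f⟩
  have hK : IsCompact (closure G) := hGbdd.isCompact_closure
  have hfD : ContinuousOn f D := by
    have : LipschitzOnWith 1 f D := by
      apply LipschitzOnWith.of_dist_le_mul
      intro a ha b hb
      simpa [dist_eq_norm] using hf a ha b hb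
    exact this.continuousOn
  have hfK : ContinuousOn f (closure G) := hfD.mono hGD
  -- a uniform bound R
  obtain ⟨R₁, hR₁⟩ := hK.isBounded.subset_closedBall 0
  obtain ⟨R₂, hR₂⟩ := ((hK.image_of_continuousOn hfK).isBounded).subset_closedBall 0
  set R : ℝ := max R₁ R₂ with hR
  have hRb : ∀ x ∈ closure G, ‖x‖ ≤ R ∧ ‖f x‖ ≤ R := by
    intro x hx
    constructor
    · have := hR₁ hx
      simp only [Metric.mem_closedBall, dist_zero_right] at this
      exact this.trans (le_max_left _ _)
    · have := hR₂ ⟨x, hx, rfl⟩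
      simp only [Metric.mem_closedBall, dist_zero_right] at this
      exact this.trans (le_max_right _ _)
  set C : ℝ := 4 * R / ‖y‖ with hC
  -- the sequence of boundary points
  have hseq : ∀ n : ℕ, ∃ w ∈ frontier G, ∃ t : ℝ, 0 ≤ t ∧ t ≤ C ∧
      (1 + ((n : ℝ) + 1)⁻¹) • w - f w = ((1 + ((n : ℝ) + 1)⁻¹) - 1) • x₀ + t • y := by
    intro n
    have h1 : (1 : ℝ) < 1 + ((n : ℝ) + 1)⁻¹ := by
      have : (0 : ℝ) < ((n : ℝ) + 1)⁻¹ := by positivity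
      linarith
    have h2 : (1 : ℝ) + ((n : ℝ) + 1)⁻¹ ≤ 2 := by
      have : ((n : ℝ) + 1)⁻¹ ≤ 1 := by
        rw [inv_le_one_iff₀]
        right
        have : (0:ℝ) ≤ (n:ℝ) := Nat.cast_nonneg n
        linarith
      linarith
    exact key_step D f hf G hGopen hGD hfK hK x₀ hx₀G hx₀f y hy0 R hRb _ h1 h2
  choose w hwfr t ht0 htC heq using hseq
  -- extract convergent subsequences
  have hfrcpt : IsCompact (frontier G) :=
    hK.of_isClosed_subset isClosed_frontier frontier_subset_closure
  obtain ⟨winf, hwinf, φ, hφ, hwconv⟩ := hfrcpt.tendsto_subseq hwfr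
  obtain ⟨tinf, htinf, ψ, hψ, htconv⟩ := (isCompact_Icc (a := (0:ℝ)) (b := C)).tendsto_subseq
    (x := fun n => t (φ n)) (fun n => ⟨ht0 _, htC _⟩)
  set σ : ℕ → ℕ := fun n => φ (ψ n) with hσ
  have hσmono : StrictMono σ := hφ.comp hψ
  have hwconv2 : Filter.Tendsto (fun n => w (σ n)) Filter.atTop (nhds winf) :=
    hwconv.comp hψ.tendsto_atTop
  have htconv2 : Filter.Tendsto (fun n => t (σ n)) Filter.atTop (nhds tinf) := htconv
  -- the scalar sequence tends to 1
  have hlconv : Filter.Tendsto (fun n : ℕ => (1 : ℝ) + ((σ n : ℝ) + 1)⁻¹)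
      Filter.atTop (nhds 1) := by
    have h0 : Filter.Tendsto (fun n : ℕ => ((n : ℝ) + 1)⁻¹) Filter.atTop (nhds 0) := by
      apply Filter.Tendsto.comp tendsto_inv_atTop_zero
      exact Filter.tendsto_atTop_add_const_right _ 1 tendsto_natCast_atTop_atTop
    have h1 := (tendsto_const_nhds (x := (1:ℝ)) (f := Filter.atTop (α := ℕ))).add
      (h0.comp hσmono.tendsto_atTop)
    simpa using h1
  -- continuity of f at winf
  have hwinfD : winf ∈ D := hGD (frontier_subset_closure hwinf)
  have hfcont : Filter.Tendsto (fun n => f (w (σ n))) Filter.atTop (nhds (f winf)) :=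
    ((hfD.continuousAt (hD.mem_nhds hwinfD)).tendsto).comp hwconv2
  -- take limits in the identity
  have hLHS : Filter.Tendsto
      (fun n => (1 + ((σ n : ℝ) + 1)⁻¹) • w (σ n) - f (w (σ n)))
      Filter.atTop (nhds ((1:ℝ) • winf - f winf)) := (hlconv.smul hwconv2).sub hfcont
  have hRHS : Filter.Tendsto
      (fun n => ((1 + ((σ n : ℝ) + 1)⁻¹) - 1) • x₀ + t (σ n) • y)
      Filter.atTop (nhds (((1:ℝ) - 1) • x₀ + tinf • y)) :=
    ((hlconv.sub_const 1).smul tendsto_const_nhds).add (htconv2.smul_const y)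
  have hsame : (fun n => (1 + ((σ n : ℝ) + 1)⁻¹) • w (σ n) - f (w (σ n))) =
      (fun n => ((1 + ((σ n : ℝ) + 1)⁻¹) - 1) • x₀ + t (σ n) • y) := by
    funext n
    exact heq (σ n)
  rw [hsame] at hLHS
  have hlim := tendsto_nhds_unique hLHS hRHS
  have hfinal : winf - f winf = tinf • y := by
    rw [one_smul] at hlim
    rw [hlim]
    simp
  have htinfne : tinf ≠ 0 := by
    intro h0
    rw [h0, zero_smul, sub_eq_zero] at hfinal
    have : winf ∈ G := hFixG ⟨hwinfD, hfinal.symm⟩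
    rw [hGopen.frontier_eq] at hwinf
    exact hwinf.2 this
  exact ⟨winf, hwinf, tinf, lt_of_le_of_ne htinf.1 (Ne.symm htinfne), hfinal⟩
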